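/- arXiv:2504.10777 — 2 statements merged into one kernel-verified Lean document; each statement's English description precedes it below -/
import Mathlib

section
/- Let γ > 0 and let V be a k-dimensional linear subspace of ℝⁿ that admits at least one disjoint basis. Then among all bases b = (b_1, …, b_k) of V, the standard basis regularization loss L_sbr(b) attains its minimum value, this minimum value equals 0, and a basis b of V attains the minimum if and only if b is disjoint. -/
open Finset

/-- Euclidean inner product of the entrywise absolute values of two vectors in `ℝⁿ`. -/
def absDot {n : ℕ} (v w : Fin n → ℝ) : ℝ := ∑ ℓ : Fin n, |v ℓ| * |w ℓ|

/-- Euclidean norm of a vector in `ℝⁿ`. -/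
noncomputable def enorm2 {n : ℕ} (v : Fin n → ℝ) : ℝ := Real.sqrt (∑ ℓ : Fin n, (v ℓ) ^ 2)

/-- The standard basis regularization loss
`L_sbr(b) = γ Σ_{1 ≤ i < j ≤ k} (|b_i| · |b_j|) / (‖b_i‖ ‖b_j‖)`. -/
noncomputable def Lsbr {n k : ℕ} (γ : ℝ) (b : Fin k → Fin n → ℝ) : ℝ :=
  γ * ∑ i : Fin k, ∑ j : Fin k,
    if i < j then absDot (b i) (b j) / (enorm2 (b i) * enorm2 (b j)) else 0

/-- A family of vectors is disjoint if the supports of distinct members are disjoint. -/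
def DisjointFamily {n k : ℕ} (b : Fin k → Fin n → ℝ) : Prop :=
  ∀ i j : Fin k, i ≠ j → Disjoint (Function.support (b i)) (Function.support (b j))

/-- `b` is a basis of the subspace `V ⊆ ℝⁿ`: it is linearly independent and spans `V`. -/
def IsBasisOf {n k : ℕ} (V : Submodule ℝ (Fin n → ℝ)) (b : Fin k → Fin n → ℝ) : Prop :=
  LinearIndependent ℝ b ∧ Submodule.span ℝ (Set.range b) = V


lemma absDot_nonneg {n : ℕ} (v w : Fin n → ℝ) : 0 ≤ absDot v w :=
  Finset.sum_nonneg fun _ _ => mul_nonneg (abs_nonneg _) (abs_nonneg _)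

lemma absDot_comm {n : ℕ} (v w : Fin n → ℝ) : absDot v w = absDot w v := by
  unfold absDot; exact Finset.sum_congr rfl fun _ _ => mul_comm _ _

lemma enorm2_pos {n : ℕ} {v : Fin n → ℝ} (hv : v ≠ 0) : 0 < enorm2 v := by
  obtain ⟨ℓ, hℓ⟩ := Function.ne_iff.mp hv
  exact Real.sqrt_pos.mpr <| Finset.sum_pos' (fun i _ => sq_nonneg _)
    ⟨ℓ, Finset.mem_univ _, by have := pow_pos (abs_pos.mpr hℓ) 2; rwa [sq_abs] at this⟩

lemma absDot_eq_zero_of_disjoint {n : ℕ} {v w : Fin n → ℝ}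
    (h : Disjoint (Function.support v) (Function.support w)) : absDot v w = 0 := by
  apply Finset.sum_eq_zero
  intro ℓ _
  by_cases hv : v ℓ = 0
  · simp [hv]
  · have : w ℓ = 0 := by
      by_contra hw
      exact Set.disjoint_left.mp h hv hw
    simp [this]

lemma absDot_zero_disjoint {n : ℕ} {v w : Fin n → ℝ} (h : absDot v w = 0) :
    Disjoint (Function.support v) (Function.support w) := by
  rw [Set.disjoint_left]
  intro ℓ hv hw
  have := (Finset.sum_eq_zero_iff_of_nonneg
    (fun i _ => mul_nonneg (abs_nonneg (v i)) (abs_nonneg (w i)))).mp h ℓ (Finset.mem_univ _)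
  rcases mul_eq_zero.mp this with h' | h'
  · exact hv (abs_eq_zero.mp h')
  · exact hw (abs_eq_zero.mp h')

lemma lsbr_nonneg {n k : ℕ} {γ : ℝ} (hγ : 0 < γ) (b : Fin k → Fin n → ℝ) :
    0 ≤ Lsbr γ b := by
  apply mul_nonneg hγ.le
  apply Finset.sum_nonneg; intro i _
  apply Finset.sum_nonneg; intro j _
  split
  · exact div_nonneg (absDot_nonneg _ _)
      (mul_nonneg (Real.sqrt_nonneg _) (Real.sqrt_nonneg _))
  · exact le_rfl

/-- If a `k`-dimensional subspace `V` of `ℝⁿ` admits a disjoint basis, then among all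
bases of `V` the standard basis regularization loss attains its minimum, the minimum
value is `0`, and a basis attains the minimum iff it is disjoint. -/
theorem lsbr_isLeast_zero_of_exists_disjoint_basis {n k : ℕ} (γ : ℝ) (hγ : 0 < γ)
    (V : Submodule ℝ (Fin n → ℝ)) (hV : Module.finrank ℝ V = k)
    (hexists : ∃ b₀ : Fin k → Fin n → ℝ, IsBasisOf V b₀ ∧ DisjointFamily b₀) :
    IsLeast {L : ℝ | ∃ b : Fin k → Fin n → ℝ, IsBasisOf V b ∧ Lsbr γ b = L} 0 ∧
      ∀ b : Fin k → Fin n → ℝ, IsBasisOf V b → (Lsbr γ b = 0 ↔ DisjointFamily b) := by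
  have hne : ∀ b : Fin k → Fin n → ℝ, IsBasisOf V b → ∀ i, b i ≠ 0 := by
    intro b hb i
    exact hb.1.ne_zero i
  have hzero : ∀ b : Fin k → Fin n → ℝ, IsBasisOf V b → DisjointFamily b → Lsbr γ b = 0 := by
    intro b hb hd
    unfold Lsbr
    rw [mul_eq_zero]; right
    apply Finset.sum_eq_zero; intro i _
    apply Finset.sum_eq_zero; intro j _
    split
    · rename_i hij
      rw [absDot_eq_zero_of_disjoint (hd i j hij.ne), zero_div]
    · rfl
  have hkey : ∀ b : Fin k → Fin n → ℝ, IsBasisOf V b → (Lsbr γ b = 0 ↔ DisjointFamily b) := by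
    intro b hb
    constructor
    · intro h
      unfold Lsbr at h
      rcases mul_eq_zero.mp h with h | h
      · exact absurd h hγ.ne'
      · have hterm : ∀ i ∈ Finset.univ, ∀ j ∈ (Finset.univ : Finset (Fin k)),
            (if i < j then absDot (b i) (b j) / (enorm2 (b i) * enorm2 (b j)) else 0) = 0 := by
          have h1 := (Finset.sum_eq_zero_iff_of_nonneg (fun i _ => Finset.sum_nonneg
            (fun j _ => by
              split
              · exact div_nonneg (absDot_nonneg _ _)
                  (mul_nonneg (Real.sqrt_nonneg _) (Real.sqrt_nonneg _))
              · exact le_rfl))).mp h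
          intro i hi
          exact fun j hj => (Finset.sum_eq_zero_iff_of_nonneg (fun j _ => by
            split
            · exact div_nonneg (absDot_nonneg _ _)
                (mul_nonneg (Real.sqrt_nonneg _) (Real.sqrt_nonneg _))
            · exact le_rfl)).mp (h1 i hi) j hj
        have habs : ∀ i j : Fin k, i < j → absDot (b i) (b j) = 0 := by
          intro i j hij
          have := hterm i (Finset.mem_univ _) j (Finset.mem_univ _)
          rw [if_pos hij] at this
          have hpos : 0 < enorm2 (b i) * enorm2 (b j) :=
            mul_pos (enorm2_pos (hne b hb i)) (enorm2_pos (hne b hb j))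
          exact (div_eq_zero_iff.mp this).resolve_right hpos.ne'
        intro i j hij
        rcases lt_or_gt_of_ne hij with h' | h'
        · exact absDot_zero_disjoint (habs i j h')
        · exact (absDot_zero_disjoint (habs j i h')).symm
    · exact hzero b hb
  refine ⟨⟨?_, ?_⟩, hkey⟩
  · obtain ⟨b₀, hb₀, hd₀⟩ := hexists
    exact ⟨b₀, hb₀, hzero b₀ hb₀ hd₀⟩
  · rintro L ⟨b, hb, rfl⟩
    exact lsbr_nonneg hγ b
end

section
/- Let G be a subgroup of GL(d, ℝ) all of whose elements g satisfy |det g| = 1. Let M = σ_L ∘ C_L ∘ ⋯ ∘ σ_1 ∘ C_1 be a finite composition of layers, where each layer C_i is the convolution f ↦ K_i ⋆ f with an integrable kernel K_i : ℝ^d → ℝ^{C_i^out × C_i^in} satisfying K_i(g⁻¹ v) = K_i(v) for all g ∈ G and v ∈ ℝ^d, and each σ_i is a pointwise nonlinearity acting as (σ_i f)(x) = s_i(f(x)) for a fixed function s_i : ℝ^{C_i^out} → ℝ^{C_i^out}. Assume all intermediate feature fields are bounded and measurable so that all convolutions are well-defined. Then M is G-equivariant: M(g · f) = g · M(f) for every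 g ∈ G and every admissible input feature field f, where (g · f)(x) = f(g⁻¹ x). -/
open MeasureTheory

attribute [local instance] Matrix.normedAddCommGroup

noncomputable instance matrixContinuousENormPort {m n : Type*} [Fintype m] [Fintype n] :
    ContinuousENorm (Matrix m n ℝ) :=
  SeminormedAddGroup.toContinuousENorm

/-- The feature field obtained after applying the first `i` layers of the network
`M = σ_L ∘ C_L ∘ ⋯ ∘ σ_1 ∘ C_1` to the input field `f`, where layer `i` first convolves
with the kernel `K i` and then applies the pointwise nonlinearity `s i`. -/
noncomputable def run {d : ℕ} (ch : ℕ → ℕ)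
    (K : (i : ℕ) → (Fin d → ℝ) → Matrix (Fin (ch (i + 1))) (Fin (ch i)) ℝ)
    (s : (i : ℕ) → (Fin (ch (i + 1)) → ℝ) → Fin (ch (i + 1)) → ℝ)
    (f : (Fin d → ℝ) → Fin (ch 0) → ℝ) :
    (i : ℕ) → (Fin d → ℝ) → Fin (ch i) → ℝ
  | 0 => f
  | (i + 1) => fun x => s i (∫ v, (K i v).mulVec (run ch K s f i (x + v)))

/-- A linear automorphism of `ℝ^d` with `|det| = 1` preserves Lebesgue measure. -/
lemma measurePreserving_of_abs_det_eq_one {d : ℕ}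
    (g : (Fin d → ℝ) ≃ₗ[ℝ] (Fin d → ℝ))
    (h : |LinearMap.det (g : (Fin d → ℝ) →ₗ[ℝ] (Fin d → ℝ))| = 1) :
    MeasurePreserving (g : (Fin d → ℝ) → (Fin d → ℝ)) volume volume := by
  have hdet : LinearMap.det (g : (Fin d → ℝ) →ₗ[ℝ] (Fin d → ℝ)) ≠ 0 := by
    intro h0
    rw [h0] at h
    simp at h
  refine ⟨(g : (Fin d → ℝ) →ₗ[ℝ] (Fin d → ℝ)).continuous_of_finiteDimensional.measurable, ?_⟩
  have := Real.map_linearMap_volume_pi_eq_smul_volume_pi (f := (g : (Fin d → ℝ) →ₗ[ℝ] (Fin d → ℝ))) hdet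
  rw [abs_inv, h] at this
  simpa using this

/-- Let `G` be a subgroup of `GL(d, ℝ)` (modeled as linear automorphisms of `ℝ^d`) whose
elements all have `|det g| = 1`.  A network `M = σ_L ∘ C_L ∘ ⋯ ∘ σ_1 ∘ C_1` that composes
convolutions with integrable `G`-invariant kernels (`K_i(g⁻¹ v) = K_i(v)`) and pointwise
nonlinearities is `G`-equivariant on admissible inputs (inputs all of whose intermediate
feature fields are bounded and measurable): `M(g · f) = g · M(f)`, where
`(g · f)(x) = f(g⁻¹ x)`. -/
theorem network_equivariant {d L : ℕ} (ch : ℕ → ℕ)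
    (G : Subgroup ((Fin d → ℝ) ≃ₗ[ℝ] (Fin d → ℝ)))
    (hdet : ∀ g ∈ G, |LinearMap.det (g : (Fin d → ℝ) →ₗ[ℝ] (Fin d → ℝ))| = 1)
    (K : (i : ℕ) → (Fin d → ℝ) → Matrix (Fin (ch (i + 1))) (Fin (ch i)) ℝ)
    (s : (i : ℕ) → (Fin (ch (i + 1)) → ℝ) → Fin (ch (i + 1)) → ℝ)
    (hKint : ∀ i, Integrable (K i))
    (hKinv : ∀ i, ∀ g ∈ G, ∀ v : Fin d → ℝ, K i ((g⁻¹ : (Fin d → ℝ) ≃ₗ[ℝ] _) v) = K i v)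
    (f : (Fin d → ℝ) → Fin (ch 0) → ℝ)
    (hmeas : ∀ i, Measurable (run ch K s f i))
    (hbdd : ∀ i, ∃ M, ∀ x, ‖run ch K s f i x‖ ≤ M)
    (g : (Fin d → ℝ) ≃ₗ[ℝ] (Fin d → ℝ)) (hg : g ∈ G) :
    run ch K s (fun x => f ((g⁻¹ : (Fin d → ℝ) ≃ₗ[ℝ] _) x)) L
      = fun x => run ch K s f L ((g⁻¹ : (Fin d → ℝ) ≃ₗ[ℝ] _) x) := by
  have hmp : MeasurePreserving (g : (Fin d → ℝ) → (Fin d → ℝ)) volume volume :=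
    measurePreserving_of_abs_det_eq_one g (hdet g hg)
  have hemb : MeasurableEmbedding (g : (Fin d → ℝ) → (Fin d → ℝ)) :=
    g.toContinuousLinearEquiv.toHomeomorph.measurableEmbedding
  have hKg : ∀ i (w : Fin d → ℝ), K i (g w) = K i w := by
    intro i w
    have := hKinv i g⁻¹ (inv_mem hg) w
    simpa using this
  induction L with
  | zero => rfl
  | succ i ih =>
    funext x
    show s i (∫ v, (K i v).mulVec
        (run ch K s (fun x => f ((g⁻¹ : (Fin d → ℝ) ≃ₗ[ℝ] _) x)) i (x + v)))
      = s i (∫ v, (K i v).mulVec (run ch K s f i ((g⁻¹ : (Fin d → ℝ) ≃ₗ[ℝ] _) x + v)))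
    have h1 : ∀ v : Fin d → ℝ,
        (K i v).mulVec (run ch K s (fun x => f ((g⁻¹ : (Fin d → ℝ) ≃ₗ[ℝ] _) x)) i (x + v))
          = (K i v).mulVec (run ch K s f i (g⁻¹ x + g⁻¹ v)) := by
      intro v
      rw [ih]
      simp [map_add]
    have h2 : (∫ v, (K i v).mulVec (run ch K s f i (g⁻¹ x + g⁻¹ v)))
        = ∫ v, (K i v).mulVec (run ch K s f i ((g⁻¹ : (Fin d → ℝ) ≃ₗ[ℝ] _) x + v)) := by
      rw [← hmp.integral_comp hemb
        (fun v => (K i v).mulVec (run ch K s f i ((g⁻¹ : (Fin d → ℝ) ≃ₗ[ℝ] _) x + (g⁻¹ : (Fin d → ℝ) ≃ₗ[ℝ] _) v)))]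
      refine integral_congr_ae (Filter.Eventually.of_forall fun w => ?_)
      have h3 : (g⁻¹ : (Fin d → ℝ) ≃ₗ[ℝ] _) (g w) = w := g.symm_apply_apply w
      simp [hKg, h3]
    simp only [h1, h2]
end
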